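/- Let U, V ⊆ S³, let 𝒰 ∈ U and 𝒱 ∈ V. Assume there exist s ∈ (0, π/2) and 𝒫 ∈ S³ with re 𝒫 = cos s (so that 1 lies on the boundary of the spherical cap U(𝒫,s) in S³), such that {𝒰* W : W ∈ U} ⊆ U(𝒫,s) and {W 𝒱* : W ∈ V} ⊆ U(𝒫,s). Then the product 𝒰𝒱 belongs to the boundary of the Minkowski product U ⊗ V in the topology of S³. -/

import Mathlib

open Real Set

set_option maxHeartbeats 1000000
noncomputable section

abbrev H : Type := Quaternion ℝ

/-- Inner product on ℍ regarded as ℝ⁴ : ⟨A,B⟩ = re(A B*). -/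
def qInner (a b : H) : ℝ := (a * star b).re

/-- The set of unit quaternions, the 3-sphere S³. -/
def S3 : Set H := {u : H | ‖u‖ = 1}

/-- Spherical cap U(U₀,t) = {U ∈ S³ : ⟨U,U₀⟩ ≥ cos t}. -/
def cap (u₀ : H) (t : ℝ) : Set H := {u : H | u ∈ S3 ∧ qInner u u₀ ≥ Real.cos t}

/-- Minkowski product of two quaternion sets. -/
def mprod (U V : Set H) : Set H := Set.image2 (· * ·) U V

/-- exp(s n) = cos s + (sin s) n for purely imaginary unit n. -/
def qexp (s : ℝ) (n : H) : H := (Real.cos s : H) + Real.sin s • n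

/-- The boundary (frontier) of A in the subspace topology of S³:
for A ⊆ S³ this coincides with the frontier taken in the topological subspace S³. -/
def bdryIn (A : Set H) : Set H := S3 ∩ closure A ∩ closure (S3 \ A)

/-- norm one iff normSq one -/
lemma normSq_of_norm_one {a : H} (h : ‖a‖ = 1) : Quaternion.normSq a = 1 := by
  rw [Quaternion.normSq_eq_norm_mul_self, h, mul_one]

lemma norm_one_of_normSq {a : H} (h : Quaternion.normSq a = 1) : ‖a‖ = 1 := by
  have h2 := Quaternion.normSq_eq_norm_mul_self a
  nlinarith [norm_nonneg a]

lemma re_mul_comm (a b : H) : (a * b).re = (b * a).re := by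
  rw [Quaternion.re_mul, Quaternion.re_mul]; ring

/-- The scalar inequality: cos of sums. -/
lemma scalar_key {s x y D : ℝ} (hs : s ∈ Set.Ioo 0 (π / 2))
    (hx1 : x ≤ 1) (hy1 : y ≤ 1) (hx : Real.cos s ≤ x) (hy : Real.cos s ≤ y)
    (hD : D ^ 2 ≤ (1 - x ^ 2) * (1 - y ^ 2)) :
    Real.cos (2 * s) ≤ x * y - D := by
  have hπ := Real.pi_pos
  have hc : 0 < Real.cos s := Real.cos_pos_of_mem_Ioo ⟨by linarith [hs.1], hs.2⟩
  have hx0 : (-1 : ℝ) ≤ x := by linarith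
  have hy0 : (-1 : ℝ) ≤ y := by linarith
  set α := Real.arccos x with hα
  set β := Real.arccos y with hβ
  have hcosα : Real.cos α = x := Real.cos_arccos hx0 hx1
  have hcosβ : Real.cos β = y := Real.cos_arccos hy0 hy1
  have hαs : α ≤ s := by
    by_contra h
    push_neg at h
    have := Real.cos_lt_cos_of_nonneg_of_le_pi hs.1.le (Real.arccos_le_pi x) h
    rw [hcosα] at this; linarith
  have hβs : β ≤ s := by
    by_contra h
    push_neg at h
    have := Real.cos_lt_cos_of_nonneg_of_le_pi hs.1.le (Real.arccos_le_pi y) h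
    rw [hcosβ] at this; linarith
  have hsinα : Real.sin α = Real.sqrt (1 - x ^ 2) := Real.sin_arccos x
  have hsinβ : Real.sin β = Real.sqrt (1 - y ^ 2) := Real.sin_arccos y
  have hx2 : (0:ℝ) ≤ 1 - x ^ 2 := by nlinarith
  have hD' : D ≤ Real.sin α * Real.sin β := by
    rw [hsinα, hsinβ, ← Real.sqrt_mul hx2]
    calc D ≤ |D| := le_abs_self D
      _ = Real.sqrt (D ^ 2) := (Real.sqrt_sq_eq_abs D).symm
      _ ≤ Real.sqrt ((1 - x ^ 2) * (1 - y ^ 2)) := Real.sqrt_le_sqrt hD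
  have h1 : Real.cos (α + β) ≤ x * y - D := by
    rw [Real.cos_add, hcosα, hcosβ]; linarith
  have h2 : Real.cos (2 * s) ≤ Real.cos (α + β) :=
    Real.cos_le_cos_of_nonneg_of_le_pi
      (add_nonneg (Real.arccos_nonneg x) (Real.arccos_nonneg y))
      (by linarith [hs.2]) (by linarith)
  linarith

/-- product of two unit quaternions with real part ≥ cos s has real part ≥ cos 2s. -/
lemma re_mul_ge {s : ℝ} (hs : s ∈ Set.Ioo 0 (π / 2)) {a b : H}
    (ha : Quaternion.normSq a = 1) (hb : Quaternion.normSq b = 1)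
    (hra : Real.cos s ≤ a.re) (hrb : Real.cos s ≤ b.re) :
    Real.cos (2 * s) ≤ (a * b).re := by
  have ha' := Quaternion.normSq_def' a
  have hb' := Quaternion.normSq_def' b
  rw [ha] at ha'
  rw [hb] at hb'
  have hx1 : a.re ≤ 1 := by nlinarith
  have hy1 : b.re ≤ 1 := by nlinarith
  set D := a.imI * b.imI + a.imJ * b.imJ + a.imK * b.imK with hD
  have hcs : D ^ 2 ≤ (1 - a.re ^ 2) * (1 - b.re ^ 2) := by
    have h1 : 1 - a.re ^ 2 = a.imI ^ 2 + a.imJ ^ 2 + a.imK ^ 2 := by linarith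
    have h2 : 1 - b.re ^ 2 = b.imI ^ 2 + b.imJ ^ 2 + b.imK ^ 2 := by linarith
    rw [h1, h2, hD]
    nlinarith [sq_nonneg (a.imI * b.imJ - a.imJ * b.imI),
      sq_nonneg (a.imI * b.imK - a.imK * b.imI),
      sq_nonneg (a.imJ * b.imK - a.imK * b.imJ)]
  have := scalar_key hs hx1 hy1 hra hrb hcs
  rw [Quaternion.re_mul]
  linarith

theorem stmt19 (U V : Set H) (hU : U ⊆ S3) (hV : V ⊆ S3)
    (u v : H) (hu : u ∈ U) (hv : v ∈ V)
    (s : ℝ) (hs : s ∈ Set.Ioo 0 (π / 2))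
    (P : H) (hP : P ∈ S3) (hPre : P.re = Real.cos s)
    (h₁ : (fun w : H => star u * w) '' U ⊆ cap P s)
    (h₂ : (fun w : H => w * star v) '' V ⊆ cap P s) :
    u * v ∈ bdryIn (mprod U V) := by
  have hπ := Real.pi_pos
  have hnu : ‖u‖ = 1 := hU hu
  have hnv : ‖v‖ = 1 := hV hv
  have hnsu : Quaternion.normSq u = 1 := normSq_of_norm_one hnu
  have hnsv : Quaternion.normSq v = 1 := normSq_of_norm_one hnv
  have hnsP : Quaternion.normSq P = 1 := normSq_of_norm_one hP
  have hσ : 0 < Real.sin s := Real.sin_pos_of_pos_of_lt_pi hs.1 (by linarith [hs.2])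
  have hPsum : P.imI ^ 2 + P.imJ ^ 2 + P.imK ^ 2 = Real.sin s ^ 2 := by
    have h1 := Quaternion.normSq_def' P
    rw [hnsP, hPre] at h1
    have h2 := Real.sin_sq_add_cos_sq s
    nlinarith
  -- The perturbation quaternion
  set σ := Real.sin s with hσdef
  clear_value σ
  set q : ℝ → H := fun t =>
    (⟨Real.cos t, -(Real.sin t / σ) * P.imI, -(Real.sin t / σ) * P.imJ,
      -(Real.sin t / σ) * P.imK⟩ : H) with hq
  have hqnormSq : ∀ t, Quaternion.normSq (q t) = 1 := by
    intro t
    rw [Quaternion.normSq_def']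
    show Real.cos t ^ 2 + (-(Real.sin t / σ) * P.imI) ^ 2 +
      (-(Real.sin t / σ) * P.imJ) ^ 2 + (-(Real.sin t / σ) * P.imK) ^ 2 = 1
    have h2 := Real.sin_sq_add_cos_sq t
    have hσ' : σ ≠ 0 := ne_of_gt hσ
    field_simp
    nlinarith [hPsum, h2]
  -- inner product with P²
  have hinner : ∀ t, qInner (q t) (P * P) = Real.cos (2 * s + t) := by
    intro t
    have hσ' : σ ≠ 0 := ne_of_gt hσ
    have : qInner (q t) (P * P) =
        Real.cos t * (Real.cos s ^ 2 - (P.imI ^ 2 + P.imJ ^ 2 + P.imK ^ 2)) -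
        Real.sin t / σ * (2 * Real.cos s) * (P.imI ^ 2 + P.imJ ^ 2 + P.imK ^ 2) := by
      simp only [qInner, Quaternion.re_mul, Quaternion.re_star, Quaternion.imI_star,
        Quaternion.imJ_star, Quaternion.imK_star, Quaternion.imI_mul, Quaternion.imJ_mul,
        Quaternion.imK_mul, hPre]
      show Real.cos t * _ - -(Real.sin t / σ) * P.imI * _ - _ - _ = _
      ring
    have hσ1 : σ ^ 2 + Real.cos s ^ 2 = 1 := by
      rw [hσdef]; exact Real.sin_sq_add_cos_sq s
    rw [this, hPsum, Real.cos_add, Real.cos_two_mul, Real.sin_two_mul, ← hσdef]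
    field_simp
    linear_combination (-(Real.cos t)) * hσ1
  -- the cap multiplication bound
  have hcapmul : ∀ x y : H, x ∈ cap P s → y ∈ cap P s →
      Real.cos (2 * s) ≤ qInner (x * y) (P * P) := by
    intro x y hx hy
    have hnx : Quaternion.normSq x = 1 := normSq_of_norm_one hx.1
    have hny : Quaternion.normSq y = 1 := normSq_of_norm_one hy.1
    have hnsP' : ((Quaternion.normSq P : ℝ) : H) = 1 := by rw [hnsP]; norm_num
    set a : H := star P * x with hadef
    set b : H := y * star P with hbdef
    have hna : Quaternion.normSq a = 1 := by
      rw [hadef, map_mul, Quaternion.normSq_star, hnsP, hnx, one_mul]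
    have hnb : Quaternion.normSq b = 1 := by
      rw [hbdef, map_mul, Quaternion.normSq_star, hnsP, hny, mul_one]
    have hra : Real.cos s ≤ a.re := by
      have : a.re = qInner x P := by rw [hadef, re_mul_comm]; rfl
      rw [this]; exact hx.2
    have hrb : Real.cos s ≤ b.re := hy.2
    have hkey := re_mul_ge hs hna hnb hra hrb
    have heq : qInner (x * y) (P * P) = (a * b).re := by
      have h1 : x * y * star (P * P) = x * (y * star P) * star P := by
        rw [star_mul]; simp only [mul_assoc]
      have h2 : (x * y * star (P * P)).re = (star P * (x * (y * star P))).re := by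
        rw [h1]; exact re_mul_comm _ _
      have h3 : star P * (x * (y * star P)) = a * b := by
        rw [hadef, hbdef]; simp only [mul_assoc]
      rw [qInner, h2, h3]
    rw [heq]; exact hkey
  -- q t is not realizable as a product of cap elements, for 0 < t with 2s+t ≤ π
  have hqnot : ∀ t, 0 < t → 2 * s + t ≤ π → u * q t * v ∉ mprod U V := by
    intro t ht htπ hmem
    obtain ⟨w, hw, w', hw', hww'⟩ := hmem
    have hx : star u * w ∈ cap P s := h₁ ⟨w, hw, rfl⟩
    have hy : w' * star v ∈ cap P s := h₂ ⟨w', hw', rfl⟩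
    have hqt : (star u * w) * (w' * star v) = q t := by
      have hsu : star u * u = 1 := by
        rw [Quaternion.star_mul_self, hnsu]; norm_num
      have hsv : v * star v = 1 := by
        rw [Quaternion.self_mul_star, hnsv]; norm_num
      have hww2 : w * w' = u * q t * v := hww'
      calc (star u * w) * (w' * star v) = star u * (w * w') * star v := by
            simp only [mul_assoc]
        _ = star u * (u * q t * v) * star v := by rw [hww2]
        _ = (star u * u) * q t * (v * star v) := by simp only [mul_assoc]
        _ = q t := by rw [hsu, hsv, one_mul, mul_one]
    have hge := hcapmul _ _ hx hy
    rw [hqt, hinner t] at hge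
    have hlt : Real.cos (2 * s + t) < Real.cos (2 * s) :=
      Real.cos_lt_cos_of_nonneg_of_le_pi (by linarith [hs.1]) htπ (by linarith)
    linarith
  -- norms of the perturbed points
  have hqnorm : ∀ t, ‖q t‖ = 1 := fun t => norm_one_of_normSq (hqnormSq t)
  have hdist : ∀ t, 0 ≤ t → dist (u * v) (u * q t * v) ≤ t := by
    intro t ht
    have h1 : u * v - u * q t * v = u * ((1 - q t) * v) := by noncomm_ring
    have h2 : Quaternion.normSq (1 - q t) = 2 - 2 * Real.cos t := by
      rw [Quaternion.normSq_def']
      show (1 - Real.cos t) ^ 2 + (0 - -(Real.sin t / σ) * P.imI) ^ 2 +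
        (0 - -(Real.sin t / σ) * P.imJ) ^ 2 + (0 - -(Real.sin t / σ) * P.imK) ^ 2 = _
      have hσ' : σ ≠ 0 := ne_of_gt hσ
      have h2 := Real.sin_sq_add_cos_sq t
      field_simp
      nlinarith [hPsum, h2]
    have h3 : ‖1 - q t‖ ≤ t := by
      have h4 := Quaternion.normSq_eq_norm_mul_self (1 - q t)
      rw [h2] at h4
      have h5 : 1 - Real.cos t ≤ t ^ 2 / 2 := by
        have := Real.one_sub_sq_div_two_le_cos (x := t); linarith
      nlinarith [norm_nonneg (1 - q t)]
    rw [dist_eq_norm, h1, norm_mul, norm_mul, hnu, hnv, one_mul, mul_one]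
    exact h3
  refine ⟨⟨?_, ?_⟩, ?_⟩
  · show ‖u * v‖ = 1
    rw [norm_mul, hnu, hnv, mul_one]
  · exact subset_closure (Set.mem_image2_of_mem hu hv)
  · rw [Metric.mem_closure_iff]
    intro ε hε
    obtain ⟨t, ht0, htε, htπ⟩ : ∃ t : ℝ, 0 < t ∧ t ≤ ε / 2 ∧ 2 * s + t ≤ π := by
      refine ⟨min (ε / 2) (π - 2 * s), lt_min (by linarith) (by linarith [hs.2]),
        min_le_left _ _, ?_⟩
      have := min_le_right (ε / 2) (π - 2 * s); linarith
    have hb1 : u * q t * v ∈ S3 := by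
      show ‖u * q t * v‖ = 1
      rw [norm_mul, norm_mul, hnu, hnv, hqnorm, one_mul, one_mul]
    have hb2 : u * q t * v ∉ mprod U V := hqnot t ht0 htπ
    have hb3 : dist (u * v) (u * q t * v) < ε := lt_of_le_of_lt (hdist t ht0.le) (by linarith)
    exact ⟨u * q t * v, ⟨hb1, hb2⟩, hb3⟩
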